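/- Let H_0, ..., H_{K-1} be d×d matrices, α ∈ R, define P_i = ∏_{k=K-i}^{K-1}(I - α H_k) with P_0 = I, fix 1 ≤ L ≤ K, and set k_0 = −1. Define matrix operators B^i(M) = P_i − α Σ_{k=k_{L-1-i}+1}^{K-1-i} H_k · M acting on d×d matrices (for i = 0,...,L−1, where the summation index k plays the role of k_{L-i} and the lower limit depends on the previously fixed index k_{L-1-i}). Then the nested composition B^{L-1}(B^{L-2}(...B^0(I)...)) equals I + Σ_{l=1}^{L} Σ_{0≤k_1<...<k_l<K} ∏_{i=1}^{l}(-α H_{k_i}). -/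

import Mathlib

open Matrix Finset

variable {d : ℕ}

/-- Operator (spectral) norm of a real `d × d` matrix, acting on Euclidean space. -/
noncomputable def matOpNorm (M : Matrix (Fin d) (Fin d) ℝ) : ℝ :=
  ‖Matrix.toEuclideanCLM (𝕜 := ℝ) M‖

/-- Apply a matrix to a vector of Euclidean space. -/
noncomputable def applyM (M : Matrix (Fin d) (Fin d) ℝ) (g : EuclideanSpace ℝ (Fin d)) :
    EuclideanSpace ℝ (Fin d) :=
  Matrix.toEuclideanCLM (𝕜 := ℝ) M g

/-- Ordered product `∏_{k=a}^{a+n-1} (I - α H k)`, factors ordered by increasing `k`. -/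
def mulList (H : ℕ → Matrix (Fin d) (Fin d) ℝ) (α : ℝ) (a n : ℕ) :
    Matrix (Fin d) (Fin d) ℝ :=
  ((List.range' a n).map (fun k => (1 : Matrix (Fin d) (Fin d) ℝ) - α • H k)).prod

/-- Truncated binomial expansion
`I + Σ_{l=1}^{L} Σ_{0 ≤ k₁ < … < k_l < K} ∏_{i=1}^{l} (-α H_{k_i})`,
with each inner product ordered by increasing index. -/
def binomSum (H : ℕ → Matrix (Fin d) (Fin d) ℝ) (α : ℝ) (K L : ℕ) :
    Matrix (Fin d) (Fin d) ℝ :=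
  1 + ∑ l ∈ Finset.Icc 1 L, ∑ s ∈ (Finset.range K).powersetCard l,
      ((s.sort (· ≤ ·)).map (fun k => -(α • H k))).prod

/-- The cascade of matrix operators from Proposition 3.1: `casc H α K i q` is the value of
`B^i B^{i-1} ⋯ B^0 I` when the previous summation index satisfies `k_{L-1-i} + 1 = q`
(the outermost call uses `q = 0`, corresponding to the dummy index `k₀ = -1`).
Here `B^i M = P_i - α Σ_{k = k_{L-1-i}+1}^{K-1-i} H_k M`, with `P_i = mulList H α (K-i) i`
the ordered product of the last `i` factors `I - α H_k`. -/
def casc (H : ℕ → Matrix (Fin d) (Fin d) ℝ) (α : ℝ) (K : ℕ) :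
    ℕ → ℕ → Matrix (Fin d) (Fin d) ℝ
  | 0, q => mulList H α K 0 - α • ∑ k ∈ Finset.Ico q K, H k
  | (i + 1), q =>
      mulList H α (K - (i + 1)) (i + 1)
        - α • ∑ k ∈ Finset.Ico q (K - (i + 1)), H k * casc H α K i (k + 1)

/-! ### Auxiliary machinery -/

/-- Ordered product of `-(α • H k)` over a finite set of indices, increasing order. -/
def piProd (H : ℕ → Matrix (Fin d) (Fin d) ℝ) (α : ℝ) (s : Finset ℕ) :
    Matrix (Fin d) (Fin d) ℝ :=
  ((s.sort (· ≤ ·)).map (fun k => -(α • H k))).prod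

/-- Sum of `piProd` over all subsets of `Ico q K` of cardinality `l`. -/
def Aq (H : ℕ → Matrix (Fin d) (Fin d) ℝ) (α : ℝ) (K l q : ℕ) :
    Matrix (Fin d) (Fin d) ℝ :=
  ∑ s ∈ (Finset.Ico q K).powersetCard l, piProd H α s

/-- Sum of `piProd` over all subsets of `Ico q K` of cardinality at most `m`. -/
def Sq (H : ℕ → Matrix (Fin d) (Fin d) ℝ) (α : ℝ) (K m q : ℕ) :
    Matrix (Fin d) (Fin d) ℝ :=
  ∑ l ∈ Finset.range (m + 1), Aq H α K l q

lemma piProd_empty (H : ℕ → Matrix (Fin d) (Fin d) ℝ) (α : ℝ) :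
    piProd H α ∅ = 1 := by
  simp [piProd]

lemma piProd_insert (H : ℕ → Matrix (Fin d) (Fin d) ℝ) (α : ℝ) {q : ℕ} {s : Finset ℕ}
    (h : ∀ b ∈ s, q < b) :
    piProd H α (insert q s) = (-(α • H q)) * piProd H α s := by
  have hq : q ∉ s := fun hmem => lt_irrefl q (h q hmem)
  unfold piProd
  rw [Finset.sort_insert (· ≤ ·) (fun b hb => (h b hb).le) hq, List.map_cons, List.prod_cons]

lemma Aq_zero (H : ℕ → Matrix (Fin d) (Fin d) ℝ) (α : ℝ) (K q : ℕ) :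
    Aq H α K 0 q = 1 := by
  simp [Aq, piProd_empty]

lemma Aq_succ_top (H : ℕ → Matrix (Fin d) (Fin d) ℝ) (α : ℝ) {K q : ℕ} (h : K ≤ q) (l : ℕ) :
    Aq H α K (l + 1) q = 0 := by
  unfold Aq
  rw [Finset.Ico_eq_empty (by omega), Finset.powersetCard_eq_empty.mpr (by simp), Finset.sum_empty]

lemma Sq_top (H : ℕ → Matrix (Fin d) (Fin d) ℝ) (α : ℝ) {K q : ℕ} (h : K ≤ q) (m : ℕ) :
    Sq H α K m q = 1 := by
  unfold Sq
  rw [Finset.sum_range_succ']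
  simp [Aq_zero, Aq_succ_top H α h]

/-- Decomposing by whether the minimal available index `q` belongs to the subset. -/
lemma Aq_succ_step (H : ℕ → Matrix (Fin d) (Fin d) ℝ) (α : ℝ) {K q : ℕ} (h : q < K) (l : ℕ) :
    Aq H α K (l + 1) q
      = Aq H α K (l + 1) (q + 1) + (-(α • H q)) * Aq H α K l (q + 1) := by
  have hins : insert q (Finset.Ico (q + 1) K) = Finset.Ico q K :=
    Finset.insert_Ico_add_one_left_eq_Ico h
  have hq : q ∉ Finset.Ico (q + 1) K := by simp
  unfold Aq
  rw [← hins, Finset.powersetCard_succ_insert hq]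
  have hdisj : Disjoint ((Finset.Ico (q + 1) K).powersetCard (l + 1))
      (((Finset.Ico (q + 1) K).powersetCard l).image (insert q)) := by
    rw [Finset.disjoint_left]
    intro s hs hs'
    rw [Finset.mem_powersetCard] at hs
    obtain ⟨t, ht, rfl⟩ := Finset.mem_image.mp hs'
    exact hq (hs.1 (Finset.mem_insert_self q t))
  rw [Finset.sum_union hdisj]
  congr 1
  rw [Finset.sum_image]
  · rw [Finset.mul_sum]
    refine Finset.sum_congr rfl fun s hs => ?_
    rw [Finset.mem_powersetCard] at hs
    exact piProd_insert H α fun b hb => (Finset.mem_Ico.mp (hs.1 hb)).1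
  · intro s hs t ht hst
    rw [Finset.mem_coe, Finset.mem_powersetCard] at hs ht
    have hqs : q ∉ s := fun hmem => hq (hs.1 hmem)
    have hqt : q ∉ t := fun hmem => hq (ht.1 hmem)
    rw [← Finset.erase_insert hqs, ← Finset.erase_insert hqt, hst]

/-- The "extract the minimum" recursion for `Sq`. -/
lemma Sq_rec (H : ℕ → Matrix (Fin d) (Fin d) ℝ) (α : ℝ) (K m : ℕ) :
    ∀ j q, K ≤ q + j →
      Sq H α K (m + 1) q
        = 1 + ∑ k ∈ Finset.Ico q K, (-(α • H k)) * Sq H α K m (k + 1) := by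
  intro j
  induction j with
  | zero =>
      intro q hq
      rw [Finset.Ico_eq_empty (by omega), Finset.sum_empty, add_zero,
        Sq_top H α (by omega)]
  | succ j ih =>
      intro q hq
      rcases le_or_gt K q with hKq | hKq
      · rw [Finset.Ico_eq_empty (by omega), Finset.sum_empty, add_zero, Sq_top H α hKq]
      · have step : Sq H α K (m + 1) q
            = Sq H α K (m + 1) (q + 1) + (-(α • H q)) * Sq H α K m (q + 1) := by
          unfold Sq
          rw [Finset.sum_range_succ' (fun l => Aq H α K l q),
            Finset.sum_range_succ' (fun l => Aq H α K l (q + 1))]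
          simp only [Aq_zero]
          rw [Finset.mul_sum]
          have : ∀ l ∈ Finset.range (m + 1),
              Aq H α K (l + 1) q
                = Aq H α K (l + 1) (q + 1) + (-(α • H q)) * Aq H α K l (q + 1) :=
            fun l _ => Aq_succ_step H α hKq l
          rw [Finset.sum_congr rfl this, Finset.sum_add_distrib]
          abel
        rw [step, ih (q + 1) (by omega),
          Finset.sum_eq_sum_Ico_succ_bot hKq (fun k => (-(α • H k)) * Sq H α K m (k + 1))]
        abel

lemma mulList_zero (H : ℕ → Matrix (Fin d) (Fin d) ℝ) (α : ℝ) (a : ℕ) :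
    mulList H α a 0 = 1 := by simp [mulList]

lemma mulList_succ (H : ℕ → Matrix (Fin d) (Fin d) ℝ) (α : ℝ) (a n : ℕ) :
    mulList H α a (n + 1) = (1 - α • H a) * mulList H α (a + 1) n := by
  unfold mulList
  rw [List.range'_succ, List.map_cons, List.prod_cons]

/-- Expansion of the ordered product by the first index at which `-α H` is selected. -/
lemma mulList_expand (H : ℕ → Matrix (Fin d) (Fin d) ℝ) (α : ℝ) :
    ∀ n a, mulList H α a n
      = 1 + ∑ k ∈ Finset.Ico a (a + n),
          (-(α • H k)) * mulList H α (k + 1) (a + n - (k + 1)) := by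
  intro n
  induction n with
  | zero => intro a; simp [mulList_zero]
  | succ n ih =>
      intro a
      have hlt : a < a + (n + 1) := by omega
      rw [mulList_succ, sub_mul, one_mul,
        Finset.sum_eq_sum_Ico_succ_bot hlt
          (fun k => (-(α • H k)) * mulList H α (k + 1) (a + (n + 1) - (k + 1)))]
      have h1 : a + (n + 1) - (a + 1) = n := by omega
      have h2 : a + 1 + n = a + (n + 1) := by omega
      rw [h1, ih (a + 1), h2]
      rw [show ∀ X : Matrix (Fin d) (Fin d) ℝ, (α • H a) * X = -((-(α • H a)) * X) from
        fun X => by rw [neg_mul, neg_neg]]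
      abel

/-- When all subsets of `Ico q K` are counted, `Sq` is the full ordered product. -/
lemma Sq_full (H : ℕ → Matrix (Fin d) (Fin d) ℝ) (α : ℝ) (K : ℕ) :
    ∀ m q, K ≤ q + m → Sq H α K m q = mulList H α q (K - q) := by
  intro m
  induction m with
  | zero =>
      intro q hq
      have : K - q = 0 := by omega
      rw [this, mulList_zero, Sq_top H α (by omega)]
  | succ m ih =>
      intro q hq
      rcases le_or_gt K q with hKq | hKq
      · have : K - q = 0 := by omega
        rw [this, mulList_zero, Sq_top H α hKq]
      · rw [Sq_rec H α K m (K - q) q (by omega)]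
        have hsum : ∀ k ∈ Finset.Ico q K,
            (-(α • H k)) * Sq H α K m (k + 1)
              = (-(α • H k)) * mulList H α (k + 1) (K - (k + 1)) := by
          intro k hk
          rw [Finset.mem_Ico] at hk
          rw [ih (k + 1) (by omega)]
        have e1 := mulList_expand H α (K - q) q
        rw [show q + (K - q) = K from by omega] at e1
        rw [Finset.sum_congr rfl hsum, ← e1]

/-- Main inductive step: the cascade equals the truncated subset sum. -/
lemma casc_eq_Sq (H : ℕ → Matrix (Fin d) (Fin d) ℝ) (α : ℝ) (K : ℕ) :
    ∀ i q, q + i + 1 ≤ K → casc H α K i q = Sq H α K (i + 1) q := by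
  intro i
  induction i with
  | zero =>
      intro q hq
      rw [Sq_rec H α K 0 K q (by omega)]
      have : ∀ k ∈ Finset.Ico q K,
          (-(α • H k)) * Sq H α K 0 (k + 1) = -(α • H k) := by
        intro k _
        have : Sq H α K 0 (k + 1) = 1 := by
          unfold Sq
          simp [Aq_zero]
        rw [this, mul_one]
      rw [Finset.sum_congr rfl this]
      show mulList H α K 0 - α • ∑ k ∈ Finset.Ico q K, H k = _
      rw [mulList_zero, Finset.smul_sum, sub_eq_add_neg, ← Finset.sum_neg_distrib]
  | succ i ih =>
      intro q hq
      have hiK : i + 1 ≤ K := by omega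
      have hqK : q ≤ K - (i + 1) := by omega
      show mulList H α (K - (i + 1)) (i + 1)
          - α • ∑ k ∈ Finset.Ico q (K - (i + 1)), H k * casc H α K i (k + 1) = _
      have hc : ∀ k ∈ Finset.Ico q (K - (i + 1)),
          H k * casc H α K i (k + 1) = H k * Sq H α K (i + 1) (k + 1) := by
        intro k hk
        rw [Finset.mem_Ico] at hk
        rw [ih (k + 1) (by omega)]
      rw [Finset.sum_congr rfl hc]
      -- expand the leading product
      have hexp : mulList H α (K - (i + 1)) (i + 1)
          = 1 + ∑ k ∈ Finset.Ico (K - (i + 1)) K,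
              (-(α • H k)) * Sq H α K (i + 1) (k + 1) := by
        have h1 : K - (i + 1) + (i + 1) = K := by omega
        rw [mulList_expand H α (i + 1) (K - (i + 1)), h1]
        congr 1
        refine Finset.sum_congr rfl fun k hk => ?_
        rw [Finset.mem_Ico] at hk
        rw [Sq_full H α K (i + 1) (k + 1) (by omega)]
      rw [hexp, Sq_rec H α K (i + 1) K q (by omega),
        ← Finset.sum_Ico_consecutive (fun k => (-(α • H k)) * Sq H α K (i + 1) (k + 1))
          hqK (Nat.sub_le K (i + 1))]
      rw [Finset.smul_sum]
      have : ∀ k ∈ Finset.Ico q (K - (i + 1)),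
          α • (H k * Sq H α K (i + 1) (k + 1))
            = -((-(α • H k)) * Sq H α K (i + 1) (k + 1)) := by
        intro k _
        rw [← smul_mul_assoc, neg_mul, neg_neg]
      rw [Finset.sum_congr rfl this, Finset.sum_neg_distrib, sub_neg_eq_add]
      abel

/-- Proposition 3.1: the nested composition `B^{L-1}(B^{L-2}(⋯ B^0(I)⋯))` equals the
truncated binomial expansion `I + Σ_{l=1}^{L} Σ_{0≤k₁<…<k_l<K} ∏_{i=1}^{l}(-α H_{k_i})`. -/
theorem cascade_eq_binomSum (K L : ℕ) (H : ℕ → Matrix (Fin d) (Fin d) ℝ) (α : ℝ)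
    (hL1 : 1 ≤ L) (hLK : L ≤ K) :
    casc H α K (L - 1) 0 = binomSum H α K L := by
  obtain ⟨L', rfl⟩ : ∃ L', L = L' + 1 := ⟨L - 1, by omega⟩
  have h0 : L' + 1 - 1 = L' := by omega
  rw [h0, casc_eq_Sq H α K L' 0 (by omega)]
  unfold Sq binomSum
  rw [Finset.sum_range_succ' (fun l => Aq H α K l 0), Aq_zero, add_comm]
  congr 1
  rw [← Finset.Ico_add_one_right_eq_Icc, Finset.sum_Ico_eq_sum_range]
  have h1 : L' + 1 + 1 - 1 = L' + 1 := by omega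
  rw [h1]
  refine Finset.sum_congr rfl fun l _ => ?_
  have h2 : 1 + l = l + 1 := by omega
  rw [h2]
  unfold Aq piProd
  rw [← Finset.range_eq_Ico]
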